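/- Let M ⊆ X and N ⊆ Y be closed subspaces of Banach spaces X, Y over 𝕜 (𝕜 = ℝ or ℂ), and suppose there exist continuous linear projections E : X → X and P : Y → Y with range(E) = M, range(P) = N and ‖E‖ = ‖P‖ = 1. Then for every F in the algebraic tensor product M ⊗ N, the projective norm of F computed in M ⊗ N equals the projective norm of its canonical image in X ⊗ Y: ‖F‖_{π, M⊗N} = ‖ι(F)‖_{π, X⊗Y}, where ι : M ⊗ N → X ⊗ Y is induced by the inclusions. -/

import Mathlib

/-- The projective norm of an element `F` of the algebraic tensor product `X ⊗ Y` of two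
normed spaces: the infimum of `Σᵢ ‖xᵢ‖·‖yᵢ‖` over all finite representations
`F = Σᵢ xᵢ ⊗ yᵢ`. -/
noncomputable def projNorm (𝕜 : Type*) [RCLike 𝕜] {X Y : Type*}
    [NormedAddCommGroup X] [NormedSpace 𝕜 X]
    [NormedAddCommGroup Y] [NormedSpace 𝕜 Y]
    (F : TensorProduct 𝕜 X Y) : ℝ :=
  sInf {r : ℝ | ∃ (n : ℕ) (x : Fin n → X) (y : Fin n → Y),
    F = ∑ i, x i ⊗ₜ[𝕜] y i ∧ r = ∑ i, ‖x i‖ * ‖y i‖}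

lemma exists_rep {𝕜 : Type*} [RCLike 𝕜] {X Y : Type*}
    [NormedAddCommGroup X] [NormedSpace 𝕜 X]
    [NormedAddCommGroup Y] [NormedSpace 𝕜 Y]
    (F : TensorProduct 𝕜 X Y) :
    ∃ (n : ℕ) (x : Fin n → X) (y : Fin n → Y), F = ∑ i, x i ⊗ₜ[𝕜] y i := by
  induction F using TensorProduct.induction_on with
  | zero => exact ⟨0, ![], ![], by simp⟩
  | tmul a b => exact ⟨1, ![a], ![b], by simp⟩
  | add u v hu hv =>
    obtain ⟨n, x, y, hxy⟩ := hu
    obtain ⟨m, x', y', hxy'⟩ := hv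
    refine ⟨n + m, Fin.append x x', Fin.append y y', ?_⟩
    rw [Fin.sum_univ_add]
    simp only [Fin.append_left, Fin.append_right]
    rw [← hxy, ← hxy']

lemma rep_set_nonempty {𝕜 : Type*} [RCLike 𝕜] {X Y : Type*}
    [NormedAddCommGroup X] [NormedSpace 𝕜 X]
    [NormedAddCommGroup Y] [NormedSpace 𝕜 Y]
    (F : TensorProduct 𝕜 X Y) :
    {r : ℝ | ∃ (n : ℕ) (x : Fin n → X) (y : Fin n → Y),
      F = ∑ i, x i ⊗ₜ[𝕜] y i ∧ r = ∑ i, ‖x i‖ * ‖y i‖}.Nonempty := by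
  obtain ⟨n, x, y, h⟩ := exists_rep F
  exact ⟨_, n, x, y, h, rfl⟩

lemma rep_set_bddBelow {𝕜 : Type*} [RCLike 𝕜] {X Y : Type*}
    [NormedAddCommGroup X] [NormedSpace 𝕜 X]
    [NormedAddCommGroup Y] [NormedSpace 𝕜 Y]
    (F : TensorProduct 𝕜 X Y) :
    BddBelow {r : ℝ | ∃ (n : ℕ) (x : Fin n → X) (y : Fin n → Y),
      F = ∑ i, x i ⊗ₜ[𝕜] y i ∧ r = ∑ i, ‖x i‖ * ‖y i‖} := by
  refine ⟨0, fun r hr => ?_⟩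
  obtain ⟨n, x, y, -, rfl⟩ := hr
  exact Finset.sum_nonneg fun i _ => mul_nonneg (norm_nonneg _) (norm_nonneg _)

/-- If `M`, `N` are ranges of norm-one continuous projections on Banach spaces `X`, `Y`,
then the projective norm on `M ⊗ N` agrees with the projective norm induced from `X ⊗ Y`. -/
theorem stmt_12 {𝕜 : Type*} [RCLike 𝕜] {X Y : Type*}
    [NormedAddCommGroup X] [NormedSpace 𝕜 X] [CompleteSpace X]
    [NormedAddCommGroup Y] [NormedSpace 𝕜 Y] [CompleteSpace Y]
    (M : Submodule 𝕜 X) (N : Submodule 𝕜 Y)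
    (hMc : IsClosed (M : Set X)) (hNc : IsClosed (N : Set Y))
    (E : X →L[𝕜] X) (P : Y →L[𝕜] Y)
    (hE : E.comp E = E) (hP : P.comp P = P)
    (hER : LinearMap.range (E : X →ₗ[𝕜] X) = M) (hPR : LinearMap.range (P : Y →ₗ[𝕜] Y) = N)
    (hEnorm : ‖E‖ = 1) (hPnorm : ‖P‖ = 1)
    (F : TensorProduct 𝕜 M N) :
    projNorm 𝕜 F = projNorm 𝕜 (TensorProduct.map M.subtype N.subtype F) := by
  -- corestrictions of E and P
  have hEmem : ∀ z : X, E z ∈ M := fun z => hER ▸ ⟨z, rfl⟩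
  have hPmem : ∀ z : Y, P z ∈ N := fun z => hPR ▸ ⟨z, rfl⟩
  set Et : X →ₗ[𝕜] M := (E : X →ₗ[𝕜] X).codRestrict M hEmem with hEt
  set Pt : Y →ₗ[𝕜] N := (P : Y →ₗ[𝕜] Y).codRestrict N hPmem with hPt
  have hEfix : ∀ m : M, Et (m : X) = m := by
    intro m
    obtain ⟨z, hz⟩ : (m : X) ∈ LinearMap.range (E : X →ₗ[𝕜] X) := hER ▸ m.2
    ext
    simp only [hEt, LinearMap.codRestrict_apply, ContinuousLinearMap.coe_coe]
    rw [← hz]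
    have := congrArg (fun f => f z) (congrArg (ContinuousLinearMap.toLinearMap) hE)
    simpa using this
  have hPfix : ∀ m : N, Pt (m : Y) = m := by
    intro m
    obtain ⟨z, hz⟩ : (m : Y) ∈ LinearMap.range (P : Y →ₗ[𝕜] Y) := hPR ▸ m.2
    ext
    simp only [hPt, LinearMap.codRestrict_apply, ContinuousLinearMap.coe_coe]
    rw [← hz]
    have := congrArg (fun f => f z) (congrArg (ContinuousLinearMap.toLinearMap) hP)
    simpa using this
  have hQ : (TensorProduct.map Et Pt) (TensorProduct.map M.subtype N.subtype F) = F := by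
    induction F using TensorProduct.induction_on with
    | zero => simp
    | tmul a b => simp [hEfix, hPfix]
    | add u v hu hv => simp [map_add, hu, hv]
  apply le_antisymm
  · -- projNorm F ≤ projNorm (ι F)
    refine le_csInf (rep_set_nonempty _) ?_
    rintro r ⟨n, x, y, hrep, rfl⟩
    have hrep' : F = ∑ i, Et (x i) ⊗ₜ[𝕜] Pt (y i) := by
      rw [← hQ, hrep, map_sum]
      simp [TensorProduct.map_tmul]
    have hmem : (∑ i, ‖Et (x i)‖ * ‖Pt (y i)‖) ∈
        {r : ℝ | ∃ (n : ℕ) (x : Fin n → M) (y : Fin n → N),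
          F = ∑ i, x i ⊗ₜ[𝕜] y i ∧ r = ∑ i, ‖x i‖ * ‖y i‖} :=
      ⟨n, fun i => Et (x i), fun i => Pt (y i), hrep', rfl⟩
    refine le_trans (csInf_le (rep_set_bddBelow _) hmem) ?_
    apply Finset.sum_le_sum
    intro i _
    have h1 : ‖Et (x i)‖ ≤ ‖x i‖ := by
      have : ‖E (x i)‖ ≤ ‖E‖ * ‖x i‖ := E.le_opNorm _
      simpa [hEt, hEnorm] using this
    have h2 : ‖Pt (y i)‖ ≤ ‖y i‖ := by
      have : ‖P (y i)‖ ≤ ‖P‖ * ‖y i‖ := P.le_opNorm _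
      simpa [hPt, hPnorm] using this
    exact mul_le_mul h1 h2 (norm_nonneg _) (norm_nonneg _)
  · -- projNorm (ι F) ≤ projNorm F
    refine csInf_le_csInf (rep_set_bddBelow _) (rep_set_nonempty _) ?_
    rintro r ⟨n, x, y, hrep, rfl⟩
    refine ⟨n, fun i => (x i : X), fun i => (y i : Y), ?_, by simp⟩
    rw [hrep, map_sum]
    simp [TensorProduct.map_tmul]
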